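/- arXiv:1410.7829 — 4 statements merged into one kernel-verified Lean document; each statement's English description precedes it below -/
import Mathlib

section
/- Let r ∈ ℕ and k ∈ (0, r) be non-integer. Then ∫_0^r N_r(u) / u^{r-k} du = κ(k,r) / Γ(r-k), where κ(k,r) = Γ(-k) · ∑_{m=0}^{r} (-1)^m C(r,m) m^k and N_r is the r-th B-spline. -/
open MeasureTheory Set

/-- The B-splines: `N_1 = χ_{(0,1)}`, `N_r(x) = ∫_0^1 N_{r-1}(x - t) dt` for `r ≥ 2`. -/
noncomputable def Nspline : ℕ → ℝ → ℝ
  | 0, _ => 0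
  | 1, x => if 0 < x ∧ x < 1 then 1 else 0
  | (r+2), x => ∫ t in (0:ℝ)..1, Nspline (r+1) (x - t)

/-- `κ(k,r) = Γ(-k) ∑_{m=0}^{r} (-1)^m C(r,m) m^k`. -/
noncomputable def kappa (k : ℝ) (r : ℕ) : ℝ :=
  Real.Gamma (-k) * ∑ m ∈ Finset.range (r+1), (-1:ℝ)^m * (r.choose m : ℝ) * (m:ℝ)^k

lemma nspline_succ_succ (r : ℕ) (x : ℝ) :
    Nspline (r+2) x = ∫ t in (0:ℝ)..1, Nspline (r+1) (x - t) := rfl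

lemma nspline_nonneg : ∀ (r : ℕ) (x : ℝ), 0 ≤ Nspline r x
  | 0, x => le_refl _
  | 1, x => by dsimp [Nspline]; split <;> norm_num
  | (r+2), x => by
      rw [nspline_succ_succ]
      exact intervalIntegral.integral_nonneg zero_le_one
        (fun t _ => nspline_nonneg (r+1) (x - t))

lemma nspline_eq_zero_of_nonpos : ∀ (r : ℕ) {x : ℝ}, x ≤ 0 → Nspline r x = 0
  | 0, x, _ => rfl
  | 1, x, hx => by
      dsimp [Nspline]; rw [if_neg]; rintro ⟨h1, _⟩; linarith
  | (r+2), x, hx => by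
      rw [nspline_succ_succ]
      rw [intervalIntegral.integral_congr (g := fun _ => 0)]
      · simp
      · intro t ht
        rw [uIcc_of_le zero_le_one] at ht
        exact nspline_eq_zero_of_nonpos (r+1) (by linarith [ht.1])

lemma nspline_eq_zero_of_ge : ∀ (r : ℕ) {x : ℝ}, (r : ℝ) ≤ x → Nspline r x = 0
  | 0, x, _ => rfl
  | 1, x, hx => by
      dsimp [Nspline]; rw [if_neg]; rintro ⟨_, h2⟩
      norm_num at hx; linarith
  | (r+2), x, hx => by
      rw [nspline_succ_succ]
      rw [intervalIntegral.integral_congr (g := fun _ => 0)]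
      · simp
      · intro t ht
        rw [uIcc_of_le zero_le_one] at ht
        apply nspline_eq_zero_of_ge (r+1)
        push_cast at hx ⊢
        linarith [ht.2]

lemma nspline_meas_le_one : ∀ r : ℕ, Measurable (Nspline r) ∧ ∀ x, Nspline r x ≤ 1
  | 0 => ⟨measurable_const, fun x => zero_le_one⟩
  | 1 => by
      constructor
      · dsimp [Nspline]
        exact Measurable.ite (measurableSet_Ioo (a:=(0:ℝ)) (b:=1)) measurable_const
          measurable_const
      · intro x; dsimp [Nspline]; split <;> norm_num
  | (r+2) => by
      obtain ⟨hm, hb⟩ := nspline_meas_le_one (r+1)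
      have hii : ∀ a b : ℝ, IntervalIntegrable (Nspline (r+1)) volume a b := by
        intro a b
        rw [intervalIntegrable_iff]
        apply Measure.integrableOn_of_bounded (M := 1) measure_Ioc_lt_top.ne
          hm.aestronglyMeasurable
        filter_upwards with x
        rw [Real.norm_eq_abs, abs_of_nonneg (nspline_nonneg _ _)]
        exact hb x
      have hrw : ∀ x : ℝ, Nspline (r+2) x = ∫ s in (x-1)..x, Nspline (r+1) s := by
        intro x
        rw [nspline_succ_succ, intervalIntegral.integral_comp_sub_left]
        norm_num
      constructor
      · have hc : Continuous (Nspline (r+2)) := by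
          have h1 : Continuous fun x : ℝ => ∫ s in (0:ℝ)..x, Nspline (r+1) s :=
            intervalIntegral.continuous_primitive hii 0
          have h2 : Continuous fun x : ℝ => ∫ s in (0:ℝ)..(x-1), Nspline (r+1) s :=
            h1.comp (by continuity)
          have heq : ∀ x : ℝ, Nspline (r+2) x =
              (∫ s in (0:ℝ)..x, Nspline (r+1) s) - ∫ s in (0:ℝ)..(x-1), Nspline (r+1) s := by
            intro x
            rw [hrw x, intervalIntegral.integral_interval_sub_left (hii 0 x) (hii 0 (x-1))]
          simp only [funext heq]
          exact h1.sub h2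
        exact hc.measurable
      · intro x
        rw [hrw x]
        calc (∫ s in (x-1)..x, Nspline (r+1) s) ≤ ∫ _s in (x-1)..x, (1:ℝ) := by
              apply intervalIntegral.integral_mono_on (by linarith) (hii _ _)
                intervalIntegrable_const
              exact fun s _ => hb s
          _ = 1 := by simp

lemma nspline_measurable (r : ℕ) : Measurable (Nspline r) := (nspline_meas_le_one r).1

lemma nspline_le_one (r : ℕ) (x : ℝ) : Nspline r x ≤ 1 := (nspline_meas_le_one r).2 x

lemma nspline_intervalIntegrable (r : ℕ) (a b : ℝ) :
    IntervalIntegrable (Nspline r) volume a b := by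
  rw [intervalIntegrable_iff]
  apply Measure.integrableOn_of_bounded (M := 1) measure_Ioc_lt_top.ne
    (nspline_measurable r).aestronglyMeasurable
  filter_upwards with x
  rw [Real.norm_eq_abs, abs_of_nonneg (nspline_nonneg _ _)]
  exact nspline_le_one r x

lemma nspline_eq_primitive (r : ℕ) (x : ℝ) :
    Nspline (r+2) x = ∫ s in (x-1)..x, Nspline (r+1) s := by
  show (∫ t in (0:ℝ)..1, Nspline (r+1) (x - t)) = _
  rw [intervalIntegral.integral_comp_sub_left]
  norm_num

lemma nspline_le_pow : ∀ (r : ℕ) (x : ℝ), 0 ≤ x → Nspline (r+1) x ≤ x ^ r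
  | 0, x, hx => by simpa using nspline_le_one 1 x
  | (r+1), x, hx => by
      rcases le_or_gt 1 x with h1 | h1
      · exact (nspline_le_one _ x).trans (one_le_pow₀ h1)
      · rw [nspline_eq_primitive,
          ← intervalIntegral.integral_add_adjacent_intervals
            (nspline_intervalIntegrable (r+1) (x-1) 0) (nspline_intervalIntegrable (r+1) 0 x)]
        have hz : (∫ s in (x-1)..(0:ℝ), Nspline (r+1) s) = 0 := by
          rw [intervalIntegral.integral_congr (g := fun _ => 0)]
          · simp
          · intro s hs
            rw [uIcc_of_le (by linarith)] at hs
            exact nspline_eq_zero_of_nonpos (r+1) hs.2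
        rw [hz, zero_add]
        calc (∫ s in (0:ℝ)..x, Nspline (r+1) s) ≤ ∫ s in (0:ℝ)..x, s ^ r := by
              apply intervalIntegral.integral_mono_on hx (nspline_intervalIntegrable _ _ _)
                ((continuous_pow r).intervalIntegrable _ _)
              exact fun s hs => nspline_le_pow r s hs.1
          _ = x ^ (r+1) / (r+1) := by rw [integral_pow]; norm_num
          _ ≤ x ^ (r+1) := by
              apply div_le_self (pow_nonneg hx _)
              push_cast; linarith

lemma integral_Ioi_shift (g : ℝ → ℝ) (t : ℝ) (ht : 0 < t) (hg : ∀ v ≤ (0:ℝ), g v = 0) :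
    ∫ u in Ioi (0:ℝ), g (u - t) = ∫ v in Ioi (0:ℝ), g v := by
  have h1 : ∀ u : ℝ, (Ioi (0:ℝ)).indicator (fun u => g (u - t)) u
      = (Ioi (0:ℝ)).indicator g (u - t) := by
    intro u
    by_cases hu : 0 < u
    · rw [indicator_of_mem (mem_Ioi.mpr hu)]
      by_cases hut : 0 < u - t
      · rw [indicator_of_mem (mem_Ioi.mpr hut)]
      · rw [indicator_of_notMem (fun h => hut (mem_Ioi.mp h)), hg _ (by simpa using hut)]
    · rw [indicator_of_notMem (fun h => hu (mem_Ioi.mp h)), indicator_of_notMem (by simp at hu ⊢; linarith)]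
  rw [← integral_indicator measurableSet_Ioi, ← integral_indicator measurableSet_Ioi]
  simp_rw [h1]
  exact integral_sub_right_eq_self ((Ioi (0:ℝ)).indicator g) t

lemma pascal_sum (f : ℕ → ℝ) (r : ℕ) :
    ∑ m ∈ Finset.range (r+2), (-1:ℝ)^m * ((r+1).choose m : ℝ) * f m
      = (∑ m ∈ Finset.range (r+1), (-1:ℝ)^m * (r.choose m : ℝ) * f m)
        - ∑ m ∈ Finset.range (r+1), (-1:ℝ)^m * (r.choose m : ℝ) * f (m+1) := by
  rw [Finset.sum_range_succ' (fun m => (-1:ℝ)^m * ((r+1).choose m : ℝ) * f m) (r+1)]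
  have h1 : ∀ j : ℕ, (-1:ℝ)^(j+1) * ((r+1).choose (j+1) : ℝ) * f (j+1)
      = -((-1:ℝ)^j * (r.choose j : ℝ) * f (j+1)) + (-1:ℝ)^(j+1) * (r.choose (j+1) : ℝ) * f (j+1) := by
    intro j
    rw [Nat.choose_succ_succ]
    push_cast
    ring
  simp_rw [h1]
  rw [Finset.sum_add_distrib, Finset.sum_neg_distrib]
  have h2 : ∑ j ∈ Finset.range (r+1), (-1:ℝ)^(j+1) * (r.choose (j+1) : ℝ) * f (j+1)
      = (∑ m ∈ Finset.range (r+1), (-1:ℝ)^m * (r.choose m : ℝ) * f m) - f 0 := by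
    rw [Finset.sum_range_succ' (fun m => (-1:ℝ)^m * (r.choose m : ℝ) * f m) r]
    rw [Finset.sum_range_succ]
    simp [Nat.choose_succ_self]
  rw [h2]
  simp
  ring

lemma rpow_shift_intable (E b : ℝ) (h : 0 < b ∨ -1 < E) :
    IntervalIntegrable (fun t : ℝ => (t + b) ^ E) volume 0 1 := by
  have hbase : IntervalIntegrable (fun x : ℝ => x ^ E) volume b (1 + b) := by
    rcases h with hb | hE
    · refine intervalIntegral.intervalIntegrable_rpow (Or.inr ?_)
      rw [uIcc_of_le (by linarith)]
      exact fun hc => absurd hc.1 (by linarith)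
    · exact intervalIntegral.intervalIntegrable_rpow' hE
  have := hbase.comp_add_right b
  simpa using this

lemma rpow_shift_eval (E b : ℝ) (hb : 0 ≤ b) (hE : E ≠ -1) (h : 0 < b ∨ -1 < E) :
    ∫ t in (0:ℝ)..1, (t + b) ^ E = ((b+1) ^ (E+1) - b ^ (E+1)) / (E+1) := by
  rw [intervalIntegral.integral_comp_add_right (fun x : ℝ => x ^ E) b]
  rw [integral_rpow ?side]
  · norm_num [add_comm]
  case side =>
    rcases h with hb' | hE'
    · exact Or.inr ⟨hE, by rw [uIcc_of_le (by linarith)]; exact fun hc => absurd hc.1 (by linarith)⟩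
    · exact Or.inl hE'

lemma nspline_integrableOn (r : ℕ) (hr : 1 ≤ r) (s a : ℝ) (hs : s ≤ 0) (ha : 0 ≤ a)
    (hpos : 0 < a ∨ 0 < s + r) :
    IntegrableOn (fun u => Nspline r u * (u + a) ^ s) (Ioi 0) := by
  obtain ⟨m, rfl⟩ : ∃ m, r = m + 1 := ⟨r - 1, (Nat.succ_pred_eq_of_pos hr).symm⟩
  have hmeas : Measurable fun u : ℝ => Nspline (m+1) u * (u + a) ^ s :=
    (nspline_measurable _).mul (by fun_prop)
  rw [show Ioi (0:ℝ) = Ioc 0 ((m:ℝ)+1) ∪ Ioi ((m:ℝ)+1) from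
    (Ioc_union_Ioi_eq_Ioi (by positivity)).symm]
  apply IntegrableOn.union
  · rcases hpos with hapos | hspos
    · apply Measure.integrableOn_of_bounded (M := a ^ s) measure_Ioc_lt_top.ne
        hmeas.aestronglyMeasurable
      filter_upwards [ae_restrict_mem measurableSet_Ioc] with u hu
      have hu0 : 0 < u := hu.1
      have h1 : (0:ℝ) ≤ (u + a) ^ s := Real.rpow_nonneg (by linarith) s
      rw [Real.norm_eq_abs, abs_of_nonneg (mul_nonneg (nspline_nonneg _ _) h1)]
      calc Nspline (m+1) u * (u+a)^s ≤ 1 * (u+a)^s :=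
            mul_le_mul_of_nonneg_right (nspline_le_one _ _) h1
        _ = (u+a)^s := one_mul _
        _ ≤ a ^ s := Real.rpow_le_rpow_of_nonpos hapos (by linarith) hs
    · have hgint : IntegrableOn (fun u : ℝ => u ^ (s + m)) (Ioc 0 ((m:ℝ)+1)) := by
        have h2 := intervalIntegral.intervalIntegrable_rpow' (r := s + m)
          (by push_cast at hspos ⊢; linarith) (a := 0) (b := (m:ℝ)+1)
        rwa [intervalIntegrable_iff_integrableOn_Ioc_of_le (by positivity)] at h2
      apply Integrable.mono' hgint hmeas.aestronglyMeasurable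
      filter_upwards [ae_restrict_mem measurableSet_Ioc] with u hu
      have hu0 : 0 < u := hu.1
      have h1 : (0:ℝ) ≤ (u + a) ^ s := Real.rpow_nonneg (by linarith) s
      rw [Real.norm_eq_abs, abs_of_nonneg (mul_nonneg (nspline_nonneg _ _) h1)]
      calc Nspline (m+1) u * (u+a)^s ≤ u ^ m * u ^ s :=
            mul_le_mul (nspline_le_pow m u hu0.le)
              (Real.rpow_le_rpow_of_nonpos hu0 (by linarith) hs) h1 (pow_nonneg hu0.le _)
        _ = u ^ (s + m) := by
            rw [← Real.rpow_natCast u m, ← Real.rpow_add hu0, add_comm]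
  · rw [integrableOn_congr_fun (g := fun _ => (0:ℝ)) ?_ measurableSet_Ioi]
    · exact integrableOn_zero
    · intro u hu
      have : ((m+1 : ℕ) : ℝ) ≤ u := by push_cast; exact le_of_lt hu
      simp [nspline_eq_zero_of_ge (m+1) this]

lemma nspline_key (r : ℕ) (hr : 1 ≤ r) : ∀ (s a : ℝ), s ≤ 0 →
    (∀ j : ℕ, j < r → s + j + 1 ≠ 0) → 0 ≤ a → (0 < a ∨ 0 < s + r) →
    (∫ u in Ioi (0:ℝ), Nspline r u * (u + a) ^ s)
      = (-1:ℝ)^r / (∏ j ∈ Finset.range r, (s + j + 1)) *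
        ∑ q ∈ Finset.range (r+1), (-1:ℝ)^q * (r.choose q : ℝ) * ((q:ℝ) + a) ^ (s + r) := by
  induction r, hr using Nat.le_induction with
  | base =>
    intro s a hs hsj ha hpos
    have h1 : ∀ u : ℝ, Nspline 1 u * (u + a) ^ s
        = (Ioo (0:ℝ) 1).indicator (fun u => (u + a) ^ s) u := by
      intro u
      by_cases h : 0 < u ∧ u < 1
      · rw [indicator_of_mem (mem_Ioo.mpr h)]
        show (if 0 < u ∧ u < 1 then (1:ℝ) else 0) * _ = _
        rw [if_pos h, one_mul]
      · rw [indicator_of_notMem (fun hc => h (mem_Ioo.mp hc))]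
        show (if 0 < u ∧ u < 1 then (1:ℝ) else 0) * _ = _
        rw [if_neg h, zero_mul]
    simp_rw [h1]
    rw [setIntegral_indicator measurableSet_Ioo,
      inter_eq_self_of_subset_right Ioo_subset_Ioi_self,
      ← integral_Ioc_eq_integral_Ioo, ← intervalIntegral.integral_of_le zero_le_one]
    have hE : s ≠ -1 := by
      have h0 := hsj 0 (by norm_num)
      intro hc; apply h0; push_cast; rw [hc]; ring
    have hor : 0 < a ∨ -1 < s := by
      rcases hpos with h | h
      · exact Or.inl h
      · right; push_cast at h; linarith
    have hsh : ∀ t : ℝ, (t + a) ^ s = (fun t : ℝ => (t + a) ^ s) t := fun _ => rfl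
    rw [show (∫ t in (0:ℝ)..1, (t + a) ^ s) = ((a+1)^(s+1) - a^(s+1))/(s+1) from
      rpow_shift_eval s a ha hE hor]
    have hs1 : s + 1 ≠ 0 := fun hc => hE (by linarith)
    simp only [Finset.prod_range_one, Finset.sum_range_succ, Finset.sum_range_one]
    push_cast
    rw [show (0:ℝ) + a = a by ring, show (1:ℝ) + a = a + 1 by ring]
    simp only [Nat.choose_one_right, Nat.choose_zero_right, Nat.cast_one]
    field_simp
    have hinv : (1 + s) * (1 + s)⁻¹ = 1 := mul_inv_cancel₀ (by rwa [add_comm])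
    linear_combination (norm := ring_nf) (a ^ (1 + s) - (1 + a) ^ (1 + s)) * hinv
  | succ n hn IH =>
    intro s a hs hsj ha hpos
    obtain ⟨m, rfl⟩ : ∃ m, n = m + 1 := ⟨n - 1, (Nat.succ_pred_eq_of_pos hn).symm⟩
    have hmeasN := nspline_measurable (m+1)
    have hnorm : ∀ u : ℝ, 0 < u → ∀ t : ℝ,
        ‖Nspline (m+1) (u - t) * (u + a) ^ s‖ = Nspline (m+1) (u - t) * (u + a) ^ s := by
      intro u hu t
      have h1 : (0:ℝ) ≤ (u + a) ^ s := Real.rpow_nonneg (by linarith) s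
      rw [Real.norm_eq_abs, abs_of_nonneg (mul_nonneg (nspline_nonneg _ _) h1)]
    have hswap :
        (∫ u in Ioi (0:ℝ), Nspline (m+2) u * (u + a) ^ s)
          = ∫ t in Ioc (0:ℝ) 1, ∫ u in Ioi (0:ℝ), Nspline (m+1) (u - t) * (u + a) ^ s := by
      have hips : ∀ u : ℝ, Nspline (m+2) u * (u + a) ^ s
          = ∫ t in Ioc (0:ℝ) 1, Nspline (m+1) (u - t) * (u + a) ^ s := by
        intro u
        rw [show Nspline (m+2) u = ∫ t in (0:ℝ)..1, Nspline (m+1) (u - t) from rfl,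
          intervalIntegral.integral_of_le zero_le_one, ← integral_mul_const]
      simp_rw [hips]
      apply integral_integral_swap
      have hFm : AEStronglyMeasurable
          (Function.uncurry fun u t : ℝ => Nspline (m+1) (u - t) * (u + a) ^ s)
          ((volume.restrict (Ioi 0)).prod (volume.restrict (Ioc 0 1))) := by
        apply Measurable.aestronglyMeasurable
        exact (hmeasN.comp (measurable_fst.sub measurable_snd)).mul (by fun_prop)
      rw [integrable_prod_iff hFm]
      simp only [Function.uncurry_apply_pair]
      constructor
      · filter_upwards [ae_restrict_mem measurableSet_Ioi] with u hu
        have hu0 : 0 < u := hu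
        have : IntegrableOn (fun t => Nspline (m+1) (u - t) * (u + a) ^ s) (Ioc 0 1) volume := by
          apply Measure.integrableOn_of_bounded (M := (u + a) ^ s) measure_Ioc_lt_top.ne
          · exact ((hmeasN.comp (measurable_const.sub measurable_id)).mul
              measurable_const).aestronglyMeasurable
          · filter_upwards with t
            have h1 : (0:ℝ) ≤ (u + a) ^ s := Real.rpow_nonneg (by linarith) s
            rw [hnorm u hu0 t]
            calc Nspline (m+1) (u-t) * (u+a)^s ≤ 1 * (u+a)^s :=
                  mul_le_mul_of_nonneg_right (nspline_le_one _ _) h1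
              _ = (u+a)^s := one_mul _
        exact this
      · apply Integrable.congr (nspline_integrableOn (m+2) (by omega) s a hs ha ?_)
        · filter_upwards [ae_restrict_mem measurableSet_Ioi] with u hu
          have hu0 : 0 < u := hu
          simp_rw [hnorm u hu0]
          rw [integral_mul_const, ← intervalIntegral.integral_of_le zero_le_one]
          rfl
        · rcases hpos with h | h
          · exact Or.inl h
          · right; push_cast at h ⊢; linarith
    rw [hswap]
    have hinner : ∀ t ∈ Ioc (0:ℝ) 1,
        (∫ u in Ioi (0:ℝ), Nspline (m+1) (u - t) * (u + a) ^ s)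
          = (-1:ℝ)^(m+1) / (∏ j ∈ Finset.range (m+1), (s + j + 1)) *
            ∑ q ∈ Finset.range (m+2), (-1:ℝ)^q * ((m+1).choose q : ℝ)
              * ((q:ℝ) + (a + t)) ^ (s + (m+1:ℕ)) := by
      intro t ht
      have h3 : (∫ u in Ioi (0:ℝ), Nspline (m+1) (u - t) * (u + a) ^ s)
          = ∫ v in Ioi (0:ℝ), Nspline (m+1) v * (v + (a + t)) ^ s := by
        rw [← integral_Ioi_shift (fun v => Nspline (m+1) v * (v + (a + t)) ^ s) t ht.1
          (fun v hv => by show Nspline (m+1) v * (v + (a + t)) ^ s = 0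
                          rw [nspline_eq_zero_of_nonpos _ hv, zero_mul])]
        apply setIntegral_congr_fun measurableSet_Ioi
        intro u _
        show _ = Nspline (m+1) (u - t) * ((u - t) + (a + t)) ^ s
        rw [show u - t + (a + t) = u + a by ring]
      rw [h3]
      exact IH s (a + t) hs (fun j hj => hsj j (by omega)) (by linarith [ht.1])
        (Or.inl (by linarith [ht.1]))
    rw [setIntegral_congr_fun measurableSet_Ioc hinner]
    rw [integral_const_mul]
    have hbase : ∀ (q : ℕ) (t : ℝ), (q:ℝ) + (a + t) = t + ((q:ℝ) + a) := by
      intro q t; ring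
    simp_rw [hbase]
    have hE1 : s + ((m+1:ℕ):ℝ) ≠ -1 := by
      have h0 := hsj (m+1) (by omega)
      intro hc; apply h0; push_cast at hc ⊢; linarith
    have hor : ∀ q : ℕ, 0 < (q:ℝ) + a ∨ -1 < s + ((m+1:ℕ):ℝ) := by
      intro q
      rcases hpos with h | h
      · left; have : (0:ℝ) ≤ (q:ℝ) := q.cast_nonneg; linarith
      · right; push_cast at h ⊢; linarith
    have hintq : ∀ q ∈ Finset.range (m+2), IntegrableOn
        (fun t : ℝ => (-1:ℝ)^q * (((m+1).choose q : ℕ) : ℝ)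
          * (t + ((q:ℝ) + a)) ^ (s + (m+1:ℕ))) (Ioc 0 1) := by
      intro q _
      apply Integrable.const_mul
      have h2 := rpow_shift_intable (s + ((m+1:ℕ):ℝ)) ((q:ℝ) + a) (hor q)
      rwa [intervalIntegrable_iff_integrableOn_Ioc_of_le zero_le_one] at h2
    rw [integral_finset_sum _ hintq]
    have heval : ∀ q : ℕ,
        (∫ t in Ioc (0:ℝ) 1, (-1:ℝ)^q * (((m+1).choose q : ℕ) : ℝ)
          * (t + ((q:ℝ) + a)) ^ (s + (m+1:ℕ)))
        = (-1:ℝ)^q * (((m+1).choose q : ℕ) : ℝ) *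
          (((((q:ℝ)+a)+1) ^ ((s + ((m+1:ℕ):ℝ))+1) - ((q:ℝ)+a) ^ ((s + ((m+1:ℕ):ℝ))+1))
            / ((s + ((m+1:ℕ):ℝ))+1)) := by
      intro q
      rw [integral_const_mul, ← intervalIntegral.integral_of_le zero_le_one,
        rpow_shift_eval _ _ (by positivity) hE1 (hor q)]
    simp_rw [heval]
    -- final algebra
    have hexp : s + ((m+2:ℕ):ℝ) = s + ((m+1:ℕ):ℝ) + 1 := by push_cast; ring
    rw [pascal_sum (fun q => ((q:ℝ)+a)^(s + ((m+2:ℕ):ℝ))) (m+1)]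
    have hP : (∏ j ∈ Finset.range (m+1), (s + (j:ℝ) + 1)) ≠ 0 :=
      Finset.prod_ne_zero_iff.mpr (fun j hj => hsj j (by
        have := Finset.mem_range.mp hj; omega))
    have hE0 : (s + ((m+1:ℕ):ℝ)) + 1 ≠ 0 := fun hc => hE1 (by linarith)
    rw [show (∏ j ∈ Finset.range (m+1+1), (s + (j:ℝ) + 1))
        = (∏ j ∈ Finset.range (m+1), (s + (j:ℝ) + 1)) * (s + ((m+1:ℕ):ℝ) + 1) from
      Finset.prod_range_succ _ _]
    have hcast : ∀ q : ℕ, (((q+1:ℕ)):ℝ) + a = ((q:ℝ) + a) + 1 := by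
      intro q; push_cast; ring
    simp_rw [hexp, hcast]
    have hsum : ∑ q ∈ Finset.range (m+2), (-1:ℝ)^q * (((m+1).choose q : ℕ) : ℝ) *
        (((((q:ℝ)+a)+1) ^ ((s + ((m+1:ℕ):ℝ))+1) - ((q:ℝ)+a) ^ ((s + ((m+1:ℕ):ℝ))+1))
          / ((s + ((m+1:ℕ):ℝ))+1))
        = ((∑ q ∈ Finset.range (m+2), (-1:ℝ)^q * (((m+1).choose q : ℕ) : ℝ)
              * (((q:ℝ)+a)+1) ^ ((s + ((m+1:ℕ):ℝ))+1))
          - ∑ q ∈ Finset.range (m+2), (-1:ℝ)^q * (((m+1).choose q : ℕ) : ℝ)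
              * ((q:ℝ)+a) ^ ((s + ((m+1:ℕ):ℝ))+1))
          / ((s + ((m+1:ℕ):ℝ))+1) := by
      rw [← Finset.sum_sub_distrib, Finset.sum_div]
      apply Finset.sum_congr rfl
      intro q _
      field_simp
    rw [hsum]
    field_simp
    ring

lemma gamma_prod (k : ℝ) (hknat : ∀ n : ℕ, (n : ℝ) ≠ k) : ∀ r : ℕ,
    Real.Gamma ((r:ℝ) - k) = Real.Gamma (-k) * ∏ j ∈ Finset.range r, ((j:ℝ) - k)
  | 0 => by simp
  | (r+1) => by
      have h1 : ((r+1:ℕ):ℝ) - k = ((r:ℝ) - k) + 1 := by push_cast; ring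
      rw [h1, Real.Gamma_add_one (fun hc => hknat r (by linarith [sub_eq_zero.mp hc])),
        gamma_prod k hknat r, Finset.prod_range_succ]
      ring

/-- For `r ∈ ℕ` and non-integer `k ∈ (0,r)`: `∫_0^r N_r(u)/u^{r-k} du = κ(k,r)/Γ(r-k)`. -/
theorem bspline_moment (r : ℕ) (hr : 1 ≤ r) (k : ℝ) (hk0 : 0 < k) (hkr : k < r)
    (hknat : ∀ n : ℕ, (n : ℝ) ≠ k) :
    ∫ u in (0:ℝ)..(r:ℝ), Nspline r u / u ^ ((r:ℝ) - k)
      = kappa k r / Real.Gamma ((r:ℝ) - k) := by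
  have hr0 : (0:ℝ) ≤ (r:ℝ) := r.cast_nonneg
  rw [intervalIntegral.integral_of_le hr0]
  have hcg : ∀ u ∈ Ioc 0 (r:ℝ), Nspline r u / u ^ ((r:ℝ) - k)
      = Nspline r u * (u + 0) ^ (k - (r:ℝ)) := by
    intro u hu
    rw [add_zero, div_eq_mul_inv, ← Real.rpow_neg hu.1.le]
    ring_nf
  rw [setIntegral_congr_fun measurableSet_Ioc hcg]
  have hext : (∫ u in Ioc (0:ℝ) (r:ℝ), Nspline r u * (u + 0) ^ (k - (r:ℝ)))
      = ∫ u in Ioi (0:ℝ), Nspline r u * (u + 0) ^ (k - (r:ℝ)) := by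
    rw [← inter_eq_self_of_subset_right (Ioc_subset_Ioi_self : Ioc (0:ℝ) (r:ℝ) ⊆ Ioi 0),
      ← setIntegral_indicator measurableSet_Ioc]
    apply setIntegral_congr_fun measurableSet_Ioi
    intro u hu
    by_cases h : u ≤ (r:ℝ)
    · rw [indicator_of_mem (mem_Ioc.mpr ⟨hu, h⟩)]
    · rw [indicator_of_notMem (fun hc => h hc.2)]
      show (0:ℝ) = Nspline r u * (u + 0) ^ (k - (r:ℝ))
      rw [nspline_eq_zero_of_ge r (le_of_not_ge h), zero_mul]
  rw [hext]
  have hsj : ∀ j : ℕ, j < r → (k - (r:ℝ)) + j + 1 ≠ 0 := by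
    intro j hj hc
    apply hknat (r - j - 1)
    rw [Nat.cast_sub (by omega), Nat.cast_sub (by omega)]
    push_cast
    linarith
  rw [nspline_key r hr (k - (r:ℝ)) 0 (by linarith) hsj le_rfl (Or.inr (by linarith))]
  rw [show k - (r:ℝ) + (r:ℝ) = k from by ring]
  simp_rw [add_zero]
  rw [kappa, gamma_prod k hknat r]
  have hΓ : Real.Gamma (-k) ≠ 0 :=
    Real.Gamma_ne_zero (fun m hc => hknat m (by linarith [hc]))
  have hprod1 : ∏ j ∈ Finset.range r, (k - (r:ℝ) + (j:ℝ) + 1)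
      = ∏ j ∈ Finset.range r, (k - (j:ℝ)) := by
    rw [← Finset.prod_range_reflect (fun j => k - (j:ℝ)) r]
    apply Finset.prod_congr rfl
    intro j hj
    have hj' := Finset.mem_range.mp hj
    rw [Nat.cast_sub (by omega), Nat.cast_sub (by omega)]
    push_cast
    ring
  have hprod2 : ∏ j ∈ Finset.range r, ((j:ℝ) - k)
      = (-1:ℝ)^r * ∏ j ∈ Finset.range r, (k - (j:ℝ)) := by
    have hco : ∀ j ∈ Finset.range r, (j:ℝ) - k = -1 * (k - (j:ℝ)) := fun j _ => by ring
    rw [Finset.prod_congr rfl hco, Finset.prod_mul_distrib, Finset.prod_const,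
      Finset.card_range]
  have hprodne : (∏ j ∈ Finset.range r, (k - (j:ℝ))) ≠ 0 :=
    Finset.prod_ne_zero_iff.mpr (fun j _ => sub_ne_zero.mpr (fun hc => hknat j hc.symm))
  rw [hprod1, hprod2]
  rcases Nat.even_or_odd r with hpar | hpar
  · rw [hpar.neg_one_pow]
    field_simp
  · rw [hpar.neg_one_pow]
    field_simp
end

section
/- For k ∈ (0,1), the L_1(ℝ)-norm of the Marchaud fractional derivative of the indicator function χ_{(0,h)} equals 2h^{1-k}/Γ(2-k), for every h > 0. -/
open MeasureTheory Set ENNReal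

/-- `(Δ^r_{-t} f)(x) = ∑_{m=0}^{r} (-1)^m C(r,m) f(x + m t)`. -/
noncomputable def backDiff (r : ℕ) (t : ℝ) (f : ℝ → ℝ) (x : ℝ) : ℝ :=
  ∑ m ∈ Finset.range (r+1), (-1:ℝ)^m * (r.choose m : ℝ) * f (x + m * t)

/-- The Marchaud fractional derivative. -/
noncomputable def marchaud (k : ℝ) (r : ℕ) (f : ℝ → ℝ) (x : ℝ) : ℝ :=
  (1 / kappa k r) * ∫ t in Set.Ioi (0:ℝ), backDiff r t f x / t ^ (1 + k)

lemma backDiff_one (t : ℝ) (f : ℝ → ℝ) (x : ℝ) : backDiff 1 t f x = f x - f (x + t) := by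
  simp [backDiff, Finset.sum_range_succ, sub_eq_add_neg]

lemma kappa_one {k : ℝ} (hk0 : 0 < k) : kappa k 1 = -Real.Gamma (-k) := by
  simp [kappa, Finset.sum_range_succ, Real.zero_rpow hk0.ne']

lemma kappa_one_eq {k : ℝ} (hk0 : 0 < k) (hk1 : k < 1) :
    kappa k 1 = Real.Gamma (2-k) / (k * (1-k)) := by
  have h1 : Real.Gamma (-k + 1) = -k * Real.Gamma (-k) := Real.Gamma_add_one (by linarith)
  have h2 : Real.Gamma ((1-k) + 1) = (1-k) * Real.Gamma (1-k) := Real.Gamma_add_one (by linarith)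
  have e1 : (-k) + 1 = 1 - k := by ring
  have e2 : (1-k) + 1 = 2 - k := by ring
  rw [e1] at h1; rw [e2] at h2
  rw [kappa_one hk0, h2, h1, eq_div_iff (by nlinarith : k * (1-k) ≠ 0)]
  ring

lemma kappa_one_pos {k : ℝ} (hk0 : 0 < k) (hk1 : k < 1) : 0 < kappa k 1 := by
  rw [kappa_one_eq hk0 hk1]
  exact div_pos (Real.Gamma_pos_of_pos (by linarith)) (by nlinarith)

noncomputable def Gfun (k h x : ℝ) : ℝ :=
  if x < 0 then ((h-x) ^ (-k) - (-x) ^ (-k)) / k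
  else if 0 < x ∧ x < h then (h-x) ^ (-k) / k else 0

lemma inner_integral_eq {k h : ℝ} (hk0 : 0 < k) (hk1 : k < 1) (hh : 0 < h)
    {x : ℝ} (hx : x ≠ 0) :
    ∫ t in Set.Ioi (0:ℝ),
        backDiff 1 t (Set.indicator (Set.Ioo 0 h) (fun _ => (1:ℝ))) x / t ^ (1 + k)
      = Gfun k h x := by
  set f := Set.indicator (Set.Ioo 0 h) (fun _ => (1:ℝ)) with hf
  have hval : ∀ y : ℝ, f y = if y ∈ Set.Ioo (0:ℝ) h then 1 else 0 := fun y =>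
    Set.indicator_apply _ _ _
  have hexp : -(1+k) + 1 = -k := by ring
  rcases hx.lt_or_gt with hneg | hpos
  · -- x < 0
    have hfx : f x = 0 := by rw [hval]; simp [hneg.not_gt]
    have key : ∀ t ∈ Set.Ioi (0:ℝ),
        backDiff 1 t f x / t ^ (1+k)
          = -(Set.indicator (Set.Ioo (-x) (h-x)) (fun t => t ^ (-(1+k))) t) := by
      intro t ht
      rw [backDiff_one, hfx, zero_sub, hval]
      by_cases hmem : t ∈ Set.Ioo (-x) (h-x)
      · have hm : x + t ∈ Set.Ioo (0:ℝ) h := ⟨by linarith [hmem.1], by linarith [hmem.2]⟩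
        rw [if_pos hm, Set.indicator_of_mem hmem]
        rw [Real.rpow_neg (le_of_lt ht)]
        simp [div_eq_mul_inv]
      · have hm : x + t ∉ Set.Ioo (0:ℝ) h := by
          simp only [Set.mem_Ioo, not_and_or, not_lt] at hmem ⊢
          rcases hmem with h1 | h1
          · left; linarith
          · right; linarith
        rw [if_neg hm, Set.indicator_of_notMem hmem]
        simp
    rw [setIntegral_congr_fun measurableSet_Ioi key, integral_neg,
      integral_indicator measurableSet_Ioo,
      Measure.restrict_restrict measurableSet_Ioo]
    have hsub : Set.Ioo (-x) (h-x) ∩ Set.Ioi 0 = Set.Ioo (-x) (h-x) := by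
      apply Set.inter_eq_self_of_subset_left
      intro t ht
      exact lt_trans (by linarith : (0:ℝ) < -x) ht.1
    rw [hsub, ← integral_Ioc_eq_integral_Ioo,
      ← intervalIntegral.integral_of_le (by linarith : -x ≤ h - x)]
    rw [integral_rpow (Or.inr ⟨by intro hc; rw [hc] at hexp; linarith [hexp],
      by
        intro hmem
        rw [Set.uIcc_of_le (by linarith : -x ≤ h - x)] at hmem
        linarith [hmem.1]⟩)]
    rw [hexp]
    have hG : Gfun k h x = ((h-x) ^ (-k) - (-x) ^ (-k)) / k := if_pos hneg
    rw [hG, div_neg, neg_neg]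
  · -- 0 < x
    by_cases hxh : x < h
    · -- 0 < x < h
      have hfx : f x = 1 := by rw [hval]; simp [hpos, hxh]
      have key : ∀ t ∈ Set.Ioi (0:ℝ),
          backDiff 1 t f x / t ^ (1+k)
            = Set.indicator (Set.Ici (h-x)) (fun t => t ^ (-(1+k))) t := by
        intro t ht
        rw [backDiff_one, hfx, hval]
        by_cases hmem : t ∈ Set.Ici (h-x)
        · have hm : x + t ∉ Set.Ioo (0:ℝ) h := by
            simp only [Set.mem_Ioo, not_and_or, not_lt]
            right; linarith [hmem.out]
          rw [if_neg hm, Set.indicator_of_mem hmem]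
          rw [Real.rpow_neg (le_of_lt ht)]
          simp [div_eq_mul_inv]
        · have hm : x + t ∈ Set.Ioo (0:ℝ) h := by
            simp only [Set.mem_Ici, not_le] at hmem
            exact ⟨by linarith [ht.out], by linarith⟩
          rw [if_pos hm, Set.indicator_of_notMem hmem]
          simp
      rw [setIntegral_congr_fun measurableSet_Ioi key,
        integral_indicator measurableSet_Ici,
        Measure.restrict_restrict measurableSet_Ici]
      have hsub : Set.Ici (h-x) ∩ Set.Ioi 0 = Set.Ici (h-x) := by
        apply Set.inter_eq_self_of_subset_left
        intro t ht
        exact lt_of_lt_of_le (by linarith : (0:ℝ) < h - x) ht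
      rw [hsub, integral_Ici_eq_integral_Ioi,
        integral_Ioi_rpow_of_lt (by linarith) (by linarith : (0:ℝ) < h - x), hexp]
      have hG : Gfun k h x = (h-x) ^ (-k) / k := by
        rw [Gfun, if_neg (by linarith), if_pos ⟨hpos, hxh⟩]
      rw [hG, neg_div_neg_eq]
    · -- h ≤ x
      have hfx : f x = 0 := by rw [hval]; simp [hxh]
      have key : ∀ t ∈ Set.Ioi (0:ℝ), backDiff 1 t f x / t ^ (1+k) = 0 := by
        intro t ht
        rw [backDiff_one, hfx, hval]
        have hm : x + t ∉ Set.Ioo (0:ℝ) h := by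
          simp only [Set.mem_Ioo, not_and_or, not_lt]
          right; linarith [ht.out]
        rw [if_neg hm]
        simp
      rw [setIntegral_congr_fun measurableSet_Ioi key, integral_zero]
      rw [Gfun, if_neg (by linarith), if_neg (by rintro ⟨-, hc⟩; linarith)]

section phi
variable {k h : ℝ}

private lemma Phi_cont (hk1 : k < 1) (hh : 0 < h) :
    ContinuousWithinAt (fun y : ℝ => (y ^ (1-k) - (h+y) ^ (1-k)) / (1-k)) (Set.Ici 0) 0 := by
  apply ContinuousAt.continuousWithinAt
  apply ContinuousAt.div_const
  apply ContinuousAt.sub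
  · exact Real.continuousAt_rpow_const 0 (1-k) (Or.inr (by linarith))
  · exact ((continuousAt_const.add continuousAt_id).rpow_const (Or.inl (by simpa using hh.ne')))

private lemma Phi_deriv (hk0 : 0 < k) (hk1 : k < 1) (hh : 0 < h) :
    ∀ y ∈ Set.Ioi (0:ℝ), HasDerivAt (fun y : ℝ => (y ^ (1-k) - (h+y) ^ (1-k)) / (1-k))
      (y ^ (-k) - (h+y) ^ (-k)) y := by
  intro y hy
  have hy0 : (0:ℝ) < y := hy
  have h1 : HasDerivAt (fun y : ℝ => y ^ (1-k)) ((1-k) * y ^ (1-k-1)) y :=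
    Real.hasDerivAt_rpow_const (Or.inl hy0.ne')
  have h2 : HasDerivAt (fun y : ℝ => (h+y) ^ (1-k)) ((1-k) * (h+y) ^ (1-k-1) * 1) y := by
    exact (Real.hasDerivAt_rpow_const (Or.inl (by linarith : h + y ≠ 0))).comp y
      ((hasDerivAt_id y).const_add h)
  have := (h1.sub h2).div_const (1-k)
  refine this.congr_deriv ?_
  have e : 1 - k - 1 = -k := by ring
  rw [e, mul_one, ← mul_sub, mul_div_cancel_left₀ _ (by linarith : (1:ℝ) - k ≠ 0)]

private lemma Phi_nonneg (hk0 : 0 < k) (hh : 0 < h) :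
    ∀ y ∈ Set.Ioi (0:ℝ), 0 ≤ y ^ (-k) - (h+y) ^ (-k) := by
  intro y hy
  have : (h+y) ^ (-k) ≤ y ^ (-k) :=
    Real.rpow_le_rpow_of_nonpos hy (by linarith [hy.out]) (by linarith)
  linarith

private lemma Phi_tendsto (hk0 : 0 < k) (hk1 : k < 1) (hh : 0 < h) :
    Filter.Tendsto (fun y : ℝ => (y ^ (1-k) - (h+y) ^ (1-k)) / (1-k)) Filter.atTop (nhds 0) := by
  have hb : Filter.Tendsto (fun y : ℝ => -(h * y ^ (-k)) / (1-k)) Filter.atTop (nhds 0) := by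
    have := (tendsto_rpow_neg_atTop hk0).const_mul h
    rw [mul_zero] at this
    have := (this.neg).div_const (1-k)
    simpa using this
  apply tendsto_of_tendsto_of_tendsto_of_le_of_le' hb tendsto_const_nhds
  · filter_upwards [Filter.eventually_gt_atTop (0:ℝ)] with y hy
    have key : (h+y) ^ (1-k) ≤ h * y ^ (-k) + y ^ (1-k) := by
      have e1 : (h+y) ^ (1-k) = (h+y) * (h+y) ^ (-k) := by
        rw [show (1:ℝ)-k = 1 + -k by ring, Real.rpow_add (by linarith) 1 (-k), Real.rpow_one]
      have e2 : y * y ^ (-k) = y ^ (1-k) := by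
        rw [show (1:ℝ)-k = 1 + -k by ring, Real.rpow_add hy 1 (-k), Real.rpow_one]
      have e3 : (h+y) ^ (-k) ≤ y ^ (-k) :=
        Real.rpow_le_rpow_of_nonpos hy (by linarith) (by linarith)
      calc (h+y) ^ (1-k) = h * (h+y) ^ (-k) + y * (h+y) ^ (-k) := by rw [e1]; ring
        _ ≤ h * y ^ (-k) + y * y ^ (-k) := by
            have hp : (0:ℝ) ≤ (h+y) ^ (-k) := Real.rpow_nonneg (by linarith) _
            gcongr
        _ = h * y ^ (-k) + y ^ (1-k) := by rw [e2]
    rw [div_le_div_iff_of_pos_right (by linarith : (0:ℝ) < 1 - k)] at *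
    · linarith
  · filter_upwards [Filter.eventually_gt_atTop (0:ℝ)] with y hy
    apply div_nonpos_of_nonpos_of_nonneg _ (by linarith)
    have : y ^ (1-k) ≤ (h+y) ^ (1-k) :=
      Real.rpow_le_rpow hy.le (by linarith) (by linarith)
    linarith

lemma integrableOn_phi (hk0 : 0 < k) (hk1 : k < 1) (hh : 0 < h) :
    IntegrableOn (fun y : ℝ => y ^ (-k) - (h+y) ^ (-k)) (Set.Ioi 0) :=
  integrableOn_Ioi_deriv_of_nonneg (Phi_cont hk1 hh) (Phi_deriv hk0 hk1 hh)
    (Phi_nonneg hk0 hh) (Phi_tendsto hk0 hk1 hh)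

lemma integral_phi (hk0 : 0 < k) (hk1 : k < 1) (hh : 0 < h) :
    ∫ y in Set.Ioi (0:ℝ), (y ^ (-k) - (h+y) ^ (-k)) = h ^ (1-k) / (1-k) := by
  rw [integral_Ioi_of_hasDerivAt_of_nonneg (Phi_cont hk1 hh) (Phi_deriv hk0 hk1 hh)
    (Phi_nonneg hk0 hh) (Phi_tendsto hk0 hk1 hh)]
  rw [Real.zero_rpow (by intro hc; linarith [hc] : (1:ℝ) - k ≠ 0)]
  ring
end phi

section halves
variable {k h : ℝ}

lemma G_eq_indicator_on_Ioi (hk0 : 0 < k) (hh : 0 < h) :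
    ∀ x ∈ Set.Ioi (0:ℝ), |Gfun k h x|
      = Set.indicator (Set.Ioo 0 h) (fun x => (h-x) ^ (-k) / k) x := by
  intro x hx
  have hx0 : (0:ℝ) < x := hx
  rw [Gfun, if_neg (by linarith)]
  by_cases hxh : x < h
  · rw [if_pos ⟨hx0, hxh⟩, Set.indicator_of_mem (Set.mem_Ioo.mpr ⟨hx0, hxh⟩)]
    exact abs_of_nonneg (div_nonneg (Real.rpow_nonneg (by linarith) _) hk0.le)
  · rw [if_neg (by rintro ⟨-, hc⟩; exact hxh hc),
      Set.indicator_of_notMem (by rintro ⟨-, hc⟩; exact hxh hc)]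
    simp

lemma base_integrable (hk0 : 0 < k) (hk1 : k < 1) (hh : 0 < h) :
    IntegrableOn (fun x : ℝ => (h-x) ^ (-k) / k) (Set.Ioo 0 h) := by
  have II : IntervalIntegrable (fun x : ℝ => (h-x) ^ (-k)) volume 0 h := by
    have := (intervalIntegral.intervalIntegrable_rpow' (by linarith : (-1:ℝ) < -k)
      (a := 0) (b := h)).comp_sub_left h
    simpa using this.symm
  have := (intervalIntegrable_iff_integrableOn_Ioc_of_le hh.le).mp II
  exact (this.mono_set Set.Ioo_subset_Ioc_self).div_const k

lemma G_integrableOn_Ioi (hk0 : 0 < k) (hk1 : k < 1) (hh : 0 < h) :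
    IntegrableOn (fun x => |Gfun k h x|) (Set.Ioi 0) := by
  apply IntegrableOn.congr_fun _ (fun x hx => (G_eq_indicator_on_Ioi hk0 hh x hx).symm)
    measurableSet_Ioi
  have := (integrable_indicator_iff measurableSet_Ioo).mpr (base_integrable hk0 hk1 hh)
  exact this.integrableOn

lemma G_integral_Ioi (hk0 : 0 < k) (hk1 : k < 1) (hh : 0 < h) :
    ∫ x in Set.Ioi (0:ℝ), |Gfun k h x| = h ^ (1-k) / (1-k) / k := by
  rw [setIntegral_congr_fun measurableSet_Ioi (G_eq_indicator_on_Ioi hk0 hh),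
    integral_indicator measurableSet_Ioo, Measure.restrict_restrict measurableSet_Ioo,
    Set.inter_eq_self_of_subset_left (fun t ht => ht.1),
    integral_div, ← integral_Ioc_eq_integral_Ioo,
    ← intervalIntegral.integral_of_le hh.le]
  have := intervalIntegral.integral_comp_sub_left (a := 0) (b := h)
    (fun t : ℝ => t ^ (-k)) h
  simp only [sub_zero, sub_self] at this
  rw [this, integral_rpow (Or.inl (by linarith : (-1:ℝ) < -k))]
  rw [Real.zero_rpow (by intro hc; linarith [hc] : -k + 1 ≠ 0)]
  rw [show -k + 1 = 1 - k by ring, sub_zero]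

lemma G_negcomp (hk0 : 0 < k) (hh : 0 < h) :
    ∀ y ∈ Set.Ioi (0:ℝ), |Gfun k h (-y)| = (y ^ (-k) - (h+y) ^ (-k)) / k := by
  intro y hy
  have hy0 : (0:ℝ) < y := hy
  rw [Gfun, if_pos (by linarith : -y < 0)]
  have e1 : h - -y = h + y := by ring
  have e2 : -(-y) = y := by ring
  rw [e1, e2, abs_div, abs_of_pos hk0,
    abs_of_nonpos (by
      have : (h+y) ^ (-k) ≤ y ^ (-k) :=
        Real.rpow_le_rpow_of_nonpos hy0 (by linarith) (by linarith)
      linarith), neg_sub]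

lemma G_integrableOn_Iic (hk0 : 0 < k) (hk1 : k < 1) (hh : 0 < h) :
    IntegrableOn (fun x => |Gfun k h x|) (Set.Iic 0) := by
  have base : IntegrableOn (fun y : ℝ => (y ^ (-k) - (h+y) ^ (-k)) / k) (Set.Ioi 0) :=
    (integrableOn_phi hk0 hk1 hh).div_const k
  have base2 : Integrable
      (Set.indicator (Set.Ioi 0) (fun y : ℝ => (y ^ (-k) - (h+y) ^ (-k)) / k)) := by
    rwa [integrable_indicator_iff measurableSet_Ioi]
  have base3 := base2.comp_neg
  have heq : (fun x : ℝ => Set.indicator (Set.Ioi 0)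
      (fun y : ℝ => (y ^ (-k) - (h+y) ^ (-k)) / k) (-x))
      = Set.indicator (Set.Iio 0) (fun x : ℝ => ((-x) ^ (-k) - (h+(-x)) ^ (-k)) / k) := by
    funext x
    by_cases hx : x < 0
    · rw [Set.indicator_of_mem (by simpa using hx : -x ∈ Set.Ioi (0:ℝ)),
        Set.indicator_of_mem (by exact hx)]
    · rw [Set.indicator_of_notMem (by simpa using hx),
        Set.indicator_of_notMem (by exact hx)]
  rw [heq] at base3
  rw [integrable_indicator_iff measurableSet_Iio] at base3
  have base4 : IntegrableOn (fun x => |Gfun k h x|) (Set.Iio 0) := by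
    apply base3.congr_fun _ measurableSet_Iio
    intro x hx
    have hx0 : x < 0 := hx
    have := G_negcomp hk0 hh (-x) (by simpa using hx0)
    rw [neg_neg] at this
    exact this.symm
  exact base4.congr_set_ae Iio_ae_eq_Iic.symm

lemma G_integral_Iic (hk0 : 0 < k) (hk1 : k < 1) (hh : 0 < h) :
    ∫ x in Set.Iic (0:ℝ), |Gfun k h x| = h ^ (1-k) / (1-k) / k := by
  have := integral_comp_neg_Iic (0:ℝ) (fun y => |Gfun k h (-y)|)
  simp only [neg_neg, neg_zero] at this
  rw [this, setIntegral_congr_fun measurableSet_Ioi (G_negcomp hk0 hh),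
    integral_div, integral_phi hk0 hk1 hh]

end halves

/-- For `k ∈ (0,1)` and `h > 0`, the `L_1(ℝ)`-norm of the Marchaud fractional derivative of
the indicator function `χ_{(0,h)}` equals `2h^{1-k}/Γ(2-k)`. -/
theorem marchaud_indicator_L1_norm (k : ℝ) (hk0 : 0 < k) (hk1 : k < 1) (h : ℝ) (hh : 0 < h) :
    ∫ x : ℝ, |marchaud k 1 (Set.indicator (Set.Ioo 0 h) (fun _ => (1:ℝ))) x|
      = 2 * h ^ (1 - k) / Real.Gamma (2 - k) := by
  have hκ : kappa k 1 = Real.Gamma (2-k) / (k * (1-k)) := kappa_one_eq hk0 hk1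
  have hκpos : 0 < kappa k 1 := kappa_one_pos hk0 hk1
  have hae : (fun x => |marchaud k 1 (Set.indicator (Set.Ioo 0 h) (fun _ => (1:ℝ))) x|)
      =ᵐ[volume] fun x => |1 / kappa k 1| * |Gfun k h x| := by
    filter_upwards [compl_mem_ae_iff.mpr Real.volume_singleton] with x hx
    have hx0 : x ≠ 0 := hx
    rw [marchaud, inner_integral_eq hk0 hk1 hh hx0, abs_mul]
  rw [integral_congr_ae hae, integral_const_mul,
    ← intervalIntegral.integral_Iic_add_Ioi (G_integrableOn_Iic hk0 hk1 hh) (G_integrableOn_Ioi hk0 hk1 hh),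
    G_integral_Iic hk0 hk1 hh, G_integral_Ioi hk0 hk1 hh,
    abs_of_pos (by positivity), hκ]
  have hΓ : 0 < Real.Gamma (2-k) := Real.Gamma_pos_of_pos (by linarith)
  rw [one_div_div, div_mul_eq_mul_div, div_eq_div_iff hΓ.ne' hΓ.ne']
  have h1k : (1:ℝ) - k ≠ 0 := by intro hc; linarith [hc]
  field_simp [hk0.ne', h1k]
  ring
end

section
/- Let k ∈ (0,1) and define on ℝ₊: Ω(x) = 0 for x = 0, Ω(x) = h^{-k}/Γ(2-k) for x ∈ (0,h), Ω(x) = x^{-k}/Γ(1-k) for x ≥ h, where h > 0. Then for every f: ℝ₊ → ℝ bounded with f' locally absolutely continuous and f'' bounded, the identity D^k_- f(0) − ∫_0^∞ f(x) dΩ(x) = ∫_0^∞ (R_{2-k}(t) − Ω^{[1]}(t)) f''(t) dt holds, where Ω^{[1]}(t) = ∫_0^t Ω(u) du and R_{2-k}(t) = t^{1-k}/Γ(2-k) for t > 0. -/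
open MeasureTheory Set ENNReal

/-- The function `Ω` on `ℝ₊` (case `r = 2`, `k ∈ (0,1)`). -/
noncomputable def Omega₂ (k h : ℝ) (x : ℝ) : ℝ :=
  if x ≤ 0 then 0
  else if x < h then h ^ (-k) / Real.Gamma (2 - k)
  else x ^ (-k) / Real.Gamma (1 - k)

/-- `Ω^{[1]}(t) = ∫_0^t Ω(u) du`. -/
noncomputable def Omega₂Int (k h : ℝ) (t : ℝ) : ℝ := ∫ u in (0:ℝ)..t, Omega₂ k h u

/-- `R_{2-k}(t) = t^{1-k}/Γ(2-k)` for `t > 0`, `0` otherwise. -/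
noncomputable def R2k (k : ℝ) (t : ℝ) : ℝ :=
  if 0 < t then t ^ (1 - k) / Real.Gamma (2 - k) else 0

/-- The Stieltjes integral `∫_0^∞ f dΩ` for `Ω = Omega₂ k h`: the jump of size
`h^{-k}/Γ(2-k)` at `0`, the jump of size `−k h^{-k}/Γ(2-k)` at `h`, and the absolutely
continuous part `dΩ = −k x^{-1-k}/Γ(1-k) dx` on `(h,∞)`. -/
noncomputable def stieltjesOmega₂ (k h : ℝ) (f : ℝ → ℝ) : ℝ :=
  f 0 * (h ^ (-k) / Real.Gamma (2 - k)) - f h * (k * h ^ (-k) / Real.Gamma (2 - k))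
    - (k / Real.Gamma (1 - k)) * ∫ x in Set.Ioi h, f x * x ^ (-1 - k)


open Filter Topology in
private lemma aux_int_pow {k : ℝ} (hk0 : 0 < k) (hk1 : k < 1) {w : ℝ → ℝ}
    (hw : ContinuousOn w (Set.Ioi 0)) {L C : ℝ}
    (h1 : ∀ t ∈ Set.Ioc (0:ℝ) 1, |w t| ≤ L * t)
    (h2 : ∀ t ∈ Set.Ioi (1:ℝ), |w t| ≤ C) :
    MeasureTheory.IntegrableOn (fun t => w t * t ^ (-1-k)) (Set.Ioi (0:ℝ)) := by
  have hcont : ∀ s ⊆ Set.Ioi (0:ℝ), MeasurableSet s →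
      AEStronglyMeasurable (fun t => w t * t ^ (-1-k)) (volume.restrict s) := by
    intro s hs hms
    apply ContinuousOn.aestronglyMeasurable _ hms
    exact (hw.mono hs).mul (fun t ht =>
      (Real.continuousAt_rpow_const t _ (Or.inl (ne_of_gt (hs ht)))).continuousWithinAt)
  rw [← Set.Ioc_union_Ioi_eq_Ioi (zero_le_one (α := ℝ))]
  apply MeasureTheory.IntegrableOn.union
  · have hdom : MeasureTheory.IntegrableOn (fun t => L * t ^ (-k)) (Set.Ioc (0:ℝ) 1) := by
      have h0 := intervalIntegral.intervalIntegrable_rpow' (a := 0) (b := 1)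
        (by linarith : (-1:ℝ) < -k)
      rw [intervalIntegrable_iff_integrableOn_Ioc_of_le zero_le_one] at h0
      exact h0.const_mul L
    apply hdom.mono' (hcont _ (fun x hx => hx.1) measurableSet_Ioc)
    filter_upwards [MeasureTheory.ae_restrict_mem measurableSet_Ioc] with t ht
    have ht0 : 0 < t := ht.1
    have hp : (0:ℝ) < t ^ (-1-k) := Real.rpow_pos_of_pos ht0 _
    have key : t * t ^ (-1-k) = t ^ (-k) := by
      rw [show -k = 1 + (-1-k) by ring, Real.rpow_add ht0, Real.rpow_one]
    calc ‖w t * t ^ (-1-k)‖ = |w t| * t ^ (-1-k) := by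
          rw [norm_mul, Real.norm_eq_abs, Real.norm_eq_abs, abs_of_pos hp]
      _ ≤ (L * t) * t ^ (-1-k) := mul_le_mul_of_nonneg_right (h1 t ht) hp.le
      _ = L * t ^ (-k) := by rw [mul_assoc, key]
  · have hdom : MeasureTheory.IntegrableOn (fun t => C * t ^ (-1-k)) (Set.Ioi (1:ℝ)) :=
      (integrableOn_Ioi_rpow_of_lt (by linarith) one_pos).const_mul C
    apply hdom.mono' (hcont _ (fun x hx => Set.mem_Ioi.mpr (lt_trans one_pos hx)) measurableSet_Ioi)
    filter_upwards [MeasureTheory.ae_restrict_mem measurableSet_Ioi] with t ht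
    have ht0 : (0:ℝ) < t := lt_trans one_pos ht
    have hp : (0:ℝ) < t ^ (-1-k) := Real.rpow_pos_of_pos ht0 _
    calc ‖w t * t ^ (-1-k)‖ = |w t| * t ^ (-1-k) := by
          rw [norm_mul, Real.norm_eq_abs, Real.norm_eq_abs, abs_of_pos hp]
      _ ≤ C * t ^ (-1-k) := mul_le_mul_of_nonneg_right (h2 t ht) hp.le

open Filter Topology in
/-- For `k ∈ (0,1)`, `h > 0` and every bounded `f : ℝ₊ → ℝ` with `f'` locally absolutely
continuous and `f''` bounded:
`D^k_- f(0) − ∫_0^∞ f dΩ = ∫_0^∞ (R_{2-k}(t) − Ω^{[1]}(t)) f''(t) dt`. -/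
theorem relation_halfline_r2
    (k : ℝ) (hk0 : 0 < k) (hk1 : k < 1) (h : ℝ) (hh : 0 < h)
    (f f' f'' : ℝ → ℝ) (hm : Measurable f'')
    (hfb : ∃ C, ∀ x ≥ (0:ℝ), |f x| ≤ C)
    (hd1 : ∀ x ≥ (0:ℝ), HasDerivAt f (f' x) x)
    (hd2 : ∀ x ≥ (0:ℝ), HasDerivAt f' (f'' x) x)
    (hf2b : ∃ C, ∀ x ≥ (0:ℝ), |f'' x| ≤ C) :
    marchaud k 2 f 0 - stieltjesOmega₂ k h f
      = ∫ t in Set.Ioi (0:ℝ), (R2k k t - Omega₂Int k h t) * f'' t := by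
  obtain ⟨C, hC⟩ := hfb
  obtain ⟨C2, hC2⟩ := hf2b
  have h1k : (0:ℝ) < 1 - k := by linarith
  have h2k : (0:ℝ) < 2 - k := by linarith
  have hG1 : 0 < Real.Gamma (1 - k) := Real.Gamma_pos_of_pos h1k
  have hG2 : 0 < Real.Gamma (2 - k) := Real.Gamma_pos_of_pos h2k
  have hG21 : Real.Gamma (2 - k) = (1 - k) * Real.Gamma (1 - k) := by
    have h' := Real.Gamma_add_one (ne_of_gt h1k)
    rw [show (1 - k) + 1 = 2 - k by ring] at h'
    exact h'
  have h2pow : (2:ℝ) ^ k < 2 := by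
    have h' := Real.rpow_lt_rpow_of_exponent_lt (x := 2) one_lt_two hk1
    rwa [Real.rpow_one] at h'
  have hkap : kappa k 2 = Real.Gamma (2 - k) * (2 - 2 ^ k) / (k * (1 - k)) := by
    have hGk : Real.Gamma (1 - k) = -k * Real.Gamma (-k) := by
      have h' := Real.Gamma_add_one (neg_ne_zero.mpr (ne_of_gt hk0))
      rw [show -k + 1 = 1 - k by ring] at h'
      exact h'
    have hs : kappa k 2 = Real.Gamma (-k) * ((2:ℝ) ^ k - 2) := by
      have e0 : ((0:ℕ):ℝ) ^ k = 0 := by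
        rw [Nat.cast_zero]; exact Real.zero_rpow (ne_of_gt hk0)
      have e1 : ((1:ℕ):ℝ) ^ k = 1 := by rw [Nat.cast_one]; exact Real.one_rpow k
      rw [kappa, Finset.sum_range_succ, Finset.sum_range_succ, Finset.sum_range_succ,
        Finset.sum_range_zero, e0, e1]
      congr 1
      rw [show Nat.choose 2 1 = 2 from rfl, show Nat.choose 2 2 = 1 from rfl]
      push_cast
      ring
    rw [hs, hG21, hGk]
    rw [eq_div_iff (mul_ne_zero (ne_of_gt hk0) (ne_of_gt h1k))]
    ring
  set g : ℝ → ℝ := fun t => f t - f 0 with hgdef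
  have hg0 : g 0 = 0 := by simp [hgdef]
  have hgd : ∀ x ≥ (0:ℝ), HasDerivAt g (f' x) x := fun x hx => (hd1 x hx).sub_const _
  have hgcont : ContinuousOn g (Set.Ici 0) :=
    fun x hx => ((hgd x hx).continuousAt).continuousWithinAt
  obtain ⟨L, hL0, hL⟩ : ∃ L, 0 ≤ L ∧ ∀ s ∈ Set.Icc (0:ℝ) 2, |g s| ≤ L * s := by
    obtain ⟨L0, hL0⟩ := (isCompact_Icc (a := (0:ℝ)) (b := 2)).exists_bound_of_continuousOn
      (f := f') (fun x hx => ((hd2 x hx.1).continuousAt).continuousWithinAt)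
    refine ⟨max L0 0, le_max_right _ _, fun s hs => ?_⟩
    have key := norm_image_sub_le_of_norm_deriv_le_segment'
      (f := g) (f' := f') (a := (0:ℝ)) (b := 2) (C := max L0 0)
      (fun x hx => (hgd x hx.1).hasDerivWithinAt)
      (fun x hx => le_trans (hL0 x (Set.Ico_subset_Icc_self hx)) (le_max_left L0 0)) s hs
    simp only [hg0, sub_zero, Real.norm_eq_abs] at key
    exact key
  have hgb : ∀ s ≥ (0:ℝ), |g s| ≤ 2 * C := by
    intro s hs
    calc |g s| = |f s - f 0| := rfl
      _ ≤ |f s| + |f 0| := abs_sub _ _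
      _ ≤ C + C := add_le_add (hC s hs) (hC 0 le_rfl)
      _ = 2 * C := by ring
  have hIg : IntegrableOn (fun t => g t * t ^ (-1 - k)) (Set.Ioi (0:ℝ)) := by
    apply aux_int_pow hk0 hk1 (hgcont.mono Set.Ioi_subset_Ici_self) (L := L) (C := 2 * C)
    · exact fun t ht => hL t ⟨ht.1.le, le_trans ht.2 one_le_two⟩
    · exact fun t ht => hgb t (le_of_lt (lt_trans one_pos ht))
  have hIg2 : IntegrableOn (fun t => g (2 * t) * t ^ (-1 - k)) (Set.Ioi (0:ℝ)) := by
    apply aux_int_pow hk0 hk1 (w := fun t => g (2 * t)) (L := 2 * L) (C := 2 * C)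
    · apply hgcont.comp ((continuous_const.mul continuous_id).continuousOn)
      intro t ht
      simp only [Set.mem_Ici, id_eq]
      have ht0 : (0:ℝ) < t := ht
      exact (show (0:ℝ) ≤ 2 * t by linarith)
    · intro t ht
      have : |g (2 * t)| ≤ L * (2 * t) := hL (2 * t) ⟨by linarith [ht.1], by linarith [ht.2]⟩
      calc |g (2 * t)| ≤ L * (2 * t) := this
        _ = 2 * L * t := by ring
    · intro t ht
      have ht' : (0:ℝ) ≤ 2 * t := by
        have : (1:ℝ) < t := ht
        linarith
      exact hgb _ ht'
  set I : ℝ := ∫ t in Set.Ioi (0:ℝ), g t * t ^ (-1 - k) with hIdef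
  have hscale : ∫ t in Set.Ioi (0:ℝ), g (2 * t) * t ^ (-1 - k) = 2 ^ k * I := by
    have key : ∀ t ∈ Set.Ioi (0:ℝ), g (2 * t) * t ^ (-1 - k)
        = (2:ℝ) ^ (1 + k) * (g (2 * t) * (2 * t) ^ (-1 - k)) := by
      intro t ht
      have ht0 : (0:ℝ) < t := ht
      have h2t : (2 * t : ℝ) ^ (-1 - k) = (2:ℝ) ^ (-1 - k) * t ^ (-1 - k) :=
        Real.mul_rpow (by norm_num) ht0.le
      have hone : (2:ℝ) ^ (1 + k) * (2:ℝ) ^ (-1 - k) = 1 := by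
        rw [← Real.rpow_add two_pos]
        norm_num
      calc g (2 * t) * t ^ (-1 - k)
          = ((2:ℝ) ^ (1 + k) * (2:ℝ) ^ (-1 - k)) * (g (2 * t) * t ^ (-1 - k)) := by
            rw [hone, one_mul]
        _ = (2:ℝ) ^ (1 + k) * (g (2 * t) * (2 * t) ^ (-1 - k)) := by rw [h2t]; ring
    rw [MeasureTheory.setIntegral_congr_fun measurableSet_Ioi key,
      MeasureTheory.integral_const_mul]
    rw [show (∫ t in Set.Ioi (0:ℝ), g (2 * t) * (2 * t) ^ (-1 - k))
        = (2:ℝ)⁻¹ * ∫ s in Set.Ioi (0:ℝ), g s * s ^ (-1 - k) from by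
      simpa using MeasureTheory.integral_comp_mul_left_Ioi
        (fun s => g s * s ^ (-1 - k)) 0 two_pos]
    rw [show (2:ℝ) ^ (1 + k) = 2 * 2 ^ k from by
      rw [Real.rpow_add two_pos, Real.rpow_one], ← hIdef]
    ring
  have hmar : ∫ t in Set.Ioi (0:ℝ), backDiff 2 t f 0 / t ^ (1 + k) = (2 ^ k - 2) * I := by
    have hpt : ∀ t ∈ Set.Ioi (0:ℝ), backDiff 2 t f 0 / t ^ (1 + k)
        = (-2) * (g t * t ^ (-1 - k)) + g (2 * t) * t ^ (-1 - k) := by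
      intro t ht
      have ht0 : (0:ℝ) < t := ht
      have hB : backDiff 2 t f 0 = f 0 - 2 * f t + f (2 * t) := by
        rw [backDiff, Finset.sum_range_succ, Finset.sum_range_succ, Finset.sum_range_succ,
          Finset.sum_range_zero]
        norm_num
        ring
      have hinv : t ^ (-1 - k) = (t ^ (1 + k))⁻¹ := by
        rw [show (-1 - k : ℝ) = -(1 + k) by ring, Real.rpow_neg ht0.le]
      rw [hB, div_eq_mul_inv, hgdef]
      simp only []
      rw [hinv]
      ring
    rw [MeasureTheory.setIntegral_congr_fun measurableSet_Ioi hpt,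
      MeasureTheory.integral_add (hIg.const_mul (-2)) hIg2,
      MeasureTheory.integral_const_mul, hscale, ← hIdef]
    ring
  set Ih : ℝ := ∫ t in Set.Ioc (0:ℝ) h, g t * t ^ (-1 - k) with hIhdef
  set It : ℝ := ∫ t in Set.Ioi h, g t * t ^ (-1 - k) with hItdef
  have hsplit : I = Ih + It := by
    rw [hIdef, hIhdef, hItdef, ← Set.Ioc_union_Ioi_eq_Ioi hh.le,
      MeasureTheory.setIntegral_union (Set.Ioc_disjoint_Ioi le_rfl) measurableSet_Ioi
        (hIg.mono_set Set.Ioc_subset_Ioi_self) (hIg.mono_set (Set.Ioi_subset_Ioi hh.le))]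
  have hT : ∫ x in Set.Ioi h, f x * x ^ (-1 - k) = It + f 0 * (h ^ (-k) / k) := by
    have hptw : ∀ x ∈ Set.Ioi h, f x * x ^ (-1 - k)
        = g x * x ^ (-1 - k) + f 0 * x ^ (-1 - k) := by
      intro x hx
      rw [hgdef]
      ring
    rw [MeasureTheory.setIntegral_congr_fun measurableSet_Ioi hptw,
      MeasureTheory.integral_add (hIg.mono_set (Set.Ioi_subset_Ioi hh.le))
        ((integrableOn_Ioi_rpow_of_lt (by linarith : (-1 - k : ℝ) < -1) hh).const_mul (f 0)),
      MeasureTheory.integral_const_mul,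
      integral_Ioi_rpow_of_lt (by linarith : (-1 - k : ℝ) < -1) hh,
      show (-1 - k + 1 : ℝ) = -k by ring, ← hItdef, neg_div_neg_eq]
  have hC2nn : 0 ≤ C2 := le_trans (abs_nonneg _) (hC2 0 le_rfl)
  have hOmM : Measurable (Omega₂ k h) := by
    unfold Omega₂
    refine Measurable.ite (measurableSet_le measurable_id measurable_const) measurable_const
      (Measurable.ite (measurableSet_lt measurable_id measurable_const) measurable_const
        ((measurable_id.pow_const _).div_const _))
  have hOmNN : ∀ u, 0 ≤ Omega₂ k h u := by
    intro u
    rw [Omega₂]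
    split_ifs with e1 e2
    · exact le_rfl
    · exact div_nonneg (Real.rpow_nonneg hh.le _) hG2.le
    · exact div_nonneg (Real.rpow_nonneg (le_of_lt (not_le.mp e1)) _) hG1.le
  have hOmB : ∀ u, Omega₂ k h u
      ≤ h ^ (-k) / Real.Gamma (2 - k) + h ^ (-k) / Real.Gamma (1 - k) := by
    have hnn1 : 0 ≤ h ^ (-k) / Real.Gamma (2 - k) :=
      div_nonneg (Real.rpow_nonneg hh.le _) hG2.le
    have hnn2 : 0 ≤ h ^ (-k) / Real.Gamma (1 - k) :=
      div_nonneg (Real.rpow_nonneg hh.le _) hG1.le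
    intro u
    rw [Omega₂]
    split_ifs with e1 e2
    · exact add_nonneg hnn1 hnn2
    · exact le_add_of_nonneg_right hnn2
    · have hu : h ≤ u := not_lt.mp e2
      have hu0 : (0:ℝ) < u := lt_of_lt_of_le hh hu
      have hle : u ^ (-k) ≤ h ^ (-k) := by
        rw [Real.rpow_neg hu0.le, Real.rpow_neg hh.le]
        exact inv_anti₀ (Real.rpow_pos_of_pos hh k)
          (Real.rpow_le_rpow hh.le hu hk0.le)
      calc u ^ (-k) / Real.Gamma (1 - k) ≤ h ^ (-k) / Real.Gamma (1 - k) := by gcongr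
        _ ≤ _ := le_add_of_nonneg_left hnn1
  have hOmII : ∀ a b : ℝ, IntervalIntegrable (Omega₂ k h) volume a b := by
    intro a b
    rw [intervalIntegrable_iff]
    apply MeasureTheory.Measure.integrableOn_of_bounded
      (M := h ^ (-k) / Real.Gamma (2 - k) + h ^ (-k) / Real.Gamma (1 - k))
    · rw [Set.uIoc]
      exact measure_Ioc_lt_top.ne
    · exact hOmM.aestronglyMeasurable
    · apply MeasureTheory.ae_of_all
      intro u
      rw [Real.norm_eq_abs, abs_of_nonneg (hOmNN u)]
      exact hOmB u
  have hOmle : ∀ t, 0 < t → t ≤ h →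
      Omega₂Int k h t = t * (h ^ (-k) / Real.Gamma (2 - k)) := by
    intro t ht0 hth
    have hne : ∀ᵐ u ∂(volume : Measure ℝ), u ≠ h := by
      have h0 := measure_eq_zero_iff_ae_notMem.mp (Real.volume_singleton (a := h))
      filter_upwards [h0] with u hu
      simpa using hu
    have hae : ∀ᵐ u ∂(volume : Measure ℝ), u ∈ Set.Ioc (0:ℝ) t →
        Omega₂ k h u = h ^ (-k) / Real.Gamma (2 - k) := by
      filter_upwards [hne] with u hu hmem
      rw [Omega₂, if_neg (not_le.mpr hmem.1), if_pos]
      exact lt_of_le_of_ne (le_trans hmem.2 hth) hu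
    rw [Omega₂Int, intervalIntegral.integral_of_le ht0.le,
      MeasureTheory.setIntegral_congr_ae measurableSet_Ioc hae,
      MeasureTheory.setIntegral_const, Real.volume_real_Ioc_of_le ht0.le, sub_zero,
      smul_eq_mul]
  have hOmge : ∀ t, h ≤ t → Omega₂Int k h t = t ^ (1 - k) / Real.Gamma (2 - k) := by
    intro t hht
    have hadd := intervalIntegral.integral_add_adjacent_intervals (hOmII 0 h) (hOmII h t)
    have hOmh : ∫ u in (0:ℝ)..h, Omega₂ k h u = h * (h ^ (-k) / Real.Gamma (2 - k)) := by
      have h0 := hOmle h hh le_rfl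
      rwa [Omega₂Int] at h0
    have h2' : ∫ u in h..t, Omega₂ k h u
        = ((t ^ (1 - k) - h ^ (1 - k)) / (1 - k)) / Real.Gamma (1 - k) := by
      have hcongr : Set.EqOn (Omega₂ k h) (fun u => u ^ (-k) / Real.Gamma (1 - k))
          (Set.uIcc h t) := by
        intro u hu
        rw [Set.uIcc_of_le hht] at hu
        have hu0 : (0:ℝ) < u := lt_of_lt_of_le hh hu.1
        rw [Omega₂, if_neg (not_le.mpr hu0), if_neg (not_lt.mpr hu.1)]
      rw [intervalIntegral.integral_congr hcongr, intervalIntegral.integral_div,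
        integral_rpow (Or.inl (by linarith : (-1:ℝ) < -k)),
        show (-k + 1 : ℝ) = 1 - k by ring]
    rw [Omega₂Int, ← hadd, hOmh, h2']
    have hh1k : h ^ (1 - k : ℝ) = h * h ^ (-k) := by
      rw [show (1 - k : ℝ) = 1 + -k by ring, Real.rpow_add hh, Real.rpow_one]
    rw [hG21, hh1k]
    field_simp
    ring
  have hE_int : IntegrableOn (fun t => (t ^ (1 - k) - t * h ^ (-k)) * f'' t)
      (Set.Ioc (0:ℝ) h) := by
    apply MeasureTheory.Measure.integrableOn_of_bounded
      (M := (h ^ (1 - k) + h * h ^ (-k)) * C2)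
    · exact measure_Ioc_lt_top.ne
    · exact (((measurable_id.pow_const _).sub (measurable_id.mul_const _)).mul
        hm).aestronglyMeasurable
    · filter_upwards [MeasureTheory.ae_restrict_mem measurableSet_Ioc] with t ht
      have ht0 : (0:ℝ) < t := ht.1
      have b1 : |t ^ (1 - k) - t * h ^ (-k)| ≤ h ^ (1 - k) + h * h ^ (-k) := by
        have e1 : t ^ (1 - k : ℝ) ≤ h ^ (1 - k) := Real.rpow_le_rpow ht0.le ht.2 h1k.le
        have e2 : t * h ^ (-k) ≤ h * h ^ (-k) :=
          mul_le_mul_of_nonneg_right ht.2 (Real.rpow_nonneg hh.le _)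
        have e3 : (0:ℝ) ≤ t ^ (1 - k : ℝ) := Real.rpow_nonneg ht0.le _
        have e4 : (0:ℝ) ≤ t * h ^ (-k) := mul_nonneg ht0.le (Real.rpow_nonneg hh.le _)
        calc |t ^ (1 - k) - t * h ^ (-k)| ≤ |t ^ (1 - k : ℝ)| + |t * h ^ (-k)| := abs_sub _ _
          _ = t ^ (1 - k) + t * h ^ (-k) := by rw [abs_of_nonneg e3, abs_of_nonneg e4]
          _ ≤ h ^ (1 - k) + h * h ^ (-k) := add_le_add e1 e2
      rw [Real.norm_eq_abs, abs_mul]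
      apply mul_le_mul b1 (hC2 t ht0.le) (abs_nonneg _)
      have : (0:ℝ) ≤ h ^ (1 - k : ℝ) := Real.rpow_nonneg hh.le _
      have : (0:ℝ) ≤ h * h ^ (-k) := mul_nonneg hh.le (Real.rpow_nonneg hh.le _)
      linarith
  have hIgIoc : IntegrableOn (fun t => k * (1 - k) * (g t * t ^ (-1 - k)))
      (Set.Ioc (0:ℝ) h) :=
    (hIg.mono_set Set.Ioc_subset_Ioi_self).const_mul _
  set E : ℝ := ∫ t in Set.Ioc (0:ℝ) h, (t ^ (1 - k) - t * h ^ (-k)) * f'' t with hEdef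
  have hRHS : ∫ t in Set.Ioi (0:ℝ), (R2k k t - Omega₂Int k h t) * f'' t
      = (1 / Real.Gamma (2 - k)) * E := by
    have hptw1 : Set.EqOn (fun t => (R2k k t - Omega₂Int k h t) * f'' t)
        (fun t => (1 / Real.Gamma (2 - k)) * ((t ^ (1 - k) - t * h ^ (-k)) * f'' t))
        (Set.Ioc (0:ℝ) h) := by
      intro t ht
      simp only
      rw [R2k, if_pos ht.1, hOmle t ht.1 ht.2]
      ring
    have hptw2 : Set.EqOn (fun t => (R2k k t - Omega₂Int k h t) * f'' t)
        (fun _ => (0:ℝ)) (Set.Ioi h) := by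
      intro t ht
      simp only
      rw [R2k, if_pos (lt_trans hh ht), hOmge t (le_of_lt ht), sub_self, zero_mul]
    have int1 : IntegrableOn (fun t => (R2k k t - Omega₂Int k h t) * f'' t)
        (Set.Ioc (0:ℝ) h) :=
      MeasureTheory.IntegrableOn.congr_fun
        (hE_int.const_mul (1 / Real.Gamma (2 - k))) hptw1.symm measurableSet_Ioc
    have int2 : IntegrableOn (fun t => (R2k k t - Omega₂Int k h t) * f'' t)
        (Set.Ioi h) :=
      MeasureTheory.IntegrableOn.congr_fun integrableOn_zero hptw2.symm measurableSet_Ioi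
    rw [← Set.Ioc_union_Ioi_eq_Ioi hh.le,
      MeasureTheory.setIntegral_union (Set.Ioc_disjoint_Ioi le_rfl) measurableSet_Ioi int1 int2,
      MeasureTheory.setIntegral_congr_fun measurableSet_Ioc hptw1,
      MeasureTheory.setIntegral_congr_fun measurableSet_Ioi hptw2,
      MeasureTheory.integral_const_mul, MeasureTheory.integral_zero, add_zero, ← hEdef]
  have hE : E = k * (f h - f 0) * h ^ (-k) - k * (1 - k) * Ih := by
    have hderiv : ∀ t ∈ Set.Ioo (0:ℝ) h, HasDerivAt
        (fun t => t ^ (1 - k) * f' t - (1 - k) * (t ^ (-k) * g t) - h ^ (-k) * (t * f' t - g t))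
        ((t ^ (1 - k) - t * h ^ (-k)) * f'' t + k * (1 - k) * (g t * t ^ (-1 - k))) t := by
      intro t ht
      have ht0 : (0:ℝ) < t := ht.1
      have hr1 : HasDerivAt (fun s : ℝ => s ^ (1 - k)) ((1 - k) * t ^ (-k)) t := by
        have h' := Real.hasDerivAt_rpow_const (x := t) (p := 1 - k) (Or.inl ht0.ne')
        rwa [show (1 - k - 1 : ℝ) = -k by ring] at h'
      have hr2 : HasDerivAt (fun s : ℝ => s ^ (-k)) ((-k) * t ^ (-1 - k)) t := by
        have h' := Real.hasDerivAt_rpow_const (x := t) (p := -k) (Or.inl ht0.ne')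
        rwa [show (-k - 1 : ℝ) = -1 - k by ring] at h'
      have hDD := ((hr1.mul (hd2 t ht0.le)).sub
          (HasDerivAt.const_mul (1 - k) (hr2.mul (hgd t ht0.le)))).sub
        (HasDerivAt.const_mul (h ^ (-k))
          (((hasDerivAt_id t).mul (hd2 t ht0.le)).sub (hgd t ht0.le)))
      have heq : (1 - k) * t ^ (-k) * f' t + t ^ (1 - k) * f'' t
          - (1 - k) * ((-k) * t ^ (-1 - k) * g t + t ^ (-k) * f' t)
          - h ^ (-k) * ((1 * f' t + t * f'' t) - f' t)
          = (t ^ (1 - k) - t * h ^ (-k)) * f'' t + k * (1 - k) * (g t * t ^ (-1 - k)) := by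
        ring
      rw [← heq]
      exact hDD
    have hint : IntervalIntegrable
        (fun t => (t ^ (1 - k) - t * h ^ (-k)) * f'' t + k * (1 - k) * (g t * t ^ (-1 - k)))
        volume 0 h := by
      rw [intervalIntegrable_iff_integrableOn_Ioc_of_le hh.le]
      exact hE_int.add hIgIoc
    have l1 : Filter.Tendsto (fun t : ℝ => t ^ (1 - k)) (nhdsWithin 0 (Set.Ioi 0)) (nhds 0) := by
      have hc : ContinuousAt (fun t : ℝ => t ^ (1 - k)) 0 :=
        Real.continuousAt_rpow_const 0 _ (Or.inr h1k.le)
      have h' := hc.tendsto.mono_left (nhdsWithin_le_nhds (s := Set.Ioi 0))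
      rwa [Real.zero_rpow (ne_of_gt h1k)] at h'
    have lf' : Filter.Tendsto f' (nhdsWithin 0 (Set.Ioi 0)) (nhds (f' 0)) :=
      ((hd2 0 le_rfl).continuousAt.tendsto).mono_left nhdsWithin_le_nhds
    have lg : Filter.Tendsto g (nhdsWithin 0 (Set.Ioi 0)) (nhds 0) := by
      have h' := ((hgd 0 le_rfl).continuousAt.tendsto).mono_left
        (nhdsWithin_le_nhds (s := Set.Ioi 0))
      rwa [hg0] at h'
    have lid : Filter.Tendsto (fun t : ℝ => t) (nhdsWithin 0 (Set.Ioi 0)) (nhds 0) :=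
      Filter.tendsto_id.mono_right nhdsWithin_le_nhds
    have lB : Filter.Tendsto (fun t : ℝ => t ^ (-k) * g t)
        (nhdsWithin 0 (Set.Ioi 0)) (nhds 0) := by
      apply squeeze_zero_norm' (a := fun t : ℝ => L * t ^ (1 - k))
      · filter_upwards [Ioo_mem_nhdsGT_of_mem
          (Set.mem_Ico.mpr ⟨le_refl (0:ℝ), zero_lt_one⟩)] with t ht
        have ht0 : (0:ℝ) < t := ht.1
        have hgl : |g t| ≤ L * t := hL t ⟨ht0.le, by linarith [ht.2]⟩
        have hp : (0:ℝ) < t ^ (-k) := Real.rpow_pos_of_pos ht0 _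
        calc ‖t ^ (-k) * g t‖ = t ^ (-k) * |g t| := by
              rw [norm_mul, Real.norm_eq_abs, Real.norm_eq_abs, abs_of_pos hp]
          _ ≤ t ^ (-k) * (L * t) := mul_le_mul_of_nonneg_left hgl hp.le
          _ = L * t ^ (1 - k) := by
              rw [show (1 - k : ℝ) = -k + 1 by ring, Real.rpow_add ht0, Real.rpow_one]
              ring
      · simpa using l1.const_mul L
    have ha : Filter.Tendsto
        (fun t => t ^ (1 - k) * f' t - (1 - k) * (t ^ (-k) * g t) - h ^ (-k) * (t * f' t - g t))
        (nhdsWithin 0 (Set.Ioi 0)) (nhds 0) := by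
      have h' := ((l1.mul lf').sub (lB.const_mul (1 - k))).sub
        (((lid.mul lf').sub lg).const_mul (h ^ (-k)))
      simpa using h'
    have hb : Filter.Tendsto
        (fun t => t ^ (1 - k) * f' t - (1 - k) * (t ^ (-k) * g t) - h ^ (-k) * (t * f' t - g t))
        (nhdsWithin h (Set.Iio h)) (nhds (k * (f h - f 0) * h ^ (-k))) := by
      have c1 : ContinuousAt (fun t : ℝ => t ^ (1 - k)) h :=
        Real.continuousAt_rpow_const h _ (Or.inl hh.ne')
      have c2 : ContinuousAt (fun t : ℝ => t ^ (-k)) h :=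
        Real.continuousAt_rpow_const h _ (Or.inl hh.ne')
      have c3 : ContinuousAt f' h := (hd2 h hh.le).continuousAt
      have c4 : ContinuousAt g h := (hgd h hh.le).continuousAt
      have hcΨ : ContinuousAt
          (fun t => t ^ (1 - k) * f' t - (1 - k) * (t ^ (-k) * g t)
            - h ^ (-k) * (t * f' t - g t)) h :=
        ((c1.mul c3).sub (continuousAt_const.mul (c2.mul c4))).sub
          (continuousAt_const.mul ((continuousAt_id.mul c3).sub c4))
      have h' := hcΨ.tendsto.mono_left (nhdsWithin_le_nhds (s := Set.Iio h))
      have hval : h ^ (1 - k) * f' h - (1 - k) * (h ^ (-k) * g h) - h ^ (-k) * (h * f' h - g h)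
          = k * (f h - f 0) * h ^ (-k) := by
        rw [hgdef]
        simp only
        rw [show h ^ (1 - k : ℝ) = h * h ^ (-k) from by
          rw [show (1 - k : ℝ) = 1 + -k by ring, Real.rpow_add hh, Real.rpow_one]]
        ring
      rwa [hval] at h'
    have key := intervalIntegral.integral_eq_sub_of_hasDerivAt_of_tendsto hh hderiv hint ha hb
    rw [intervalIntegral.integral_of_le hh.le,
      MeasureTheory.integral_add hE_int hIgIoc, MeasureTheory.integral_const_mul] at key
    rw [hEdef, hIhdef]
    linarith [key]
  rw [hRHS]
  simp only [marchaud, stieltjesOmega₂]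
  rw [hmar, hkap, hT, hE, hsplit]
  have hk' : k ≠ 0 := ne_of_gt hk0
  have h1k' : (1:ℝ) - k ≠ 0 := ne_of_gt h1k
  have hG1' : Real.Gamma (1 - k) ≠ 0 := ne_of_gt hG1
  have hG2' : Real.Gamma (2 - k) ≠ 0 := ne_of_gt hG2
  have h2pow' : (2:ℝ) - 2 ^ k ≠ 0 := by linarith
  rw [hG21]
  field_simp
  ring
end

section
/- Let G = ℝ or ℝ₊, let A be a homogeneous operator from a normed space X to a normed space Y with domain D_A, and let Q ⊆ D_A be a centrally symmetric convex set. Suppose there exist x₀ ∈ Q and a bounded linear operator S₀: X → Y with ‖A x₀‖_Y = U(A, S₀; Q) + ‖S₀‖·‖x₀‖_X, where U(A,S;Q) := sup_{x ∈ Q} ‖Ax − Sx‖_Y. Then Ω(‖x₀‖_X, A; Q) = ‖A x₀‖_Y and E_{‖S₀‖}(A; Q) = U(A, S₀; Q) = ‖A x₀‖_Y − ‖S₀‖·‖x₀‖_X, where Ω(δ, A; Q) := sup{‖Af‖_Y : f ∈ Q, ‖f‖_X ≤ δ} and E_N(A;Q) := inf{U(A,S;Q) : S linear bounded, ‖S‖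 ≤ N}. -/
open ENNReal

/-- The error `U(A,S;Q) = sup_{x ∈ Q} ‖Ax − Sx‖` (valued in `ℝ≥0∞`). -/
noncomputable def Uerr {X Y : Type*} [NormedAddCommGroup X] [NormedSpace ℝ X]
    [NormedAddCommGroup Y] [NormedSpace ℝ Y]
    (A : X → Y) (S : X →L[ℝ] Y) (Q : Set X) : ℝ≥0∞ :=
  ⨆ x ∈ Q, (‖A x - S x‖₊ : ℝ≥0∞)

/-- The modulus of continuity `Ω(δ,A;Q) = sup {‖Af‖ : f ∈ Q, ‖f‖ ≤ δ}`. -/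
noncomputable def modCont {X Y : Type*} [NormedAddCommGroup X] [NormedSpace ℝ X]
    [NormedAddCommGroup Y] [NormedSpace ℝ Y]
    (A : X → Y) (Q : Set X) (δ : ℝ) : ℝ≥0∞ :=
  ⨆ f ∈ {f | f ∈ Q ∧ ‖f‖ ≤ δ}, (‖A f‖₊ : ℝ≥0∞)

/-- The best approximation `E_N(A;Q) = inf {U(A,S;Q) : S linear bounded, ‖S‖ ≤ N}`. -/
noncomputable def bestApprox {X Y : Type*} [NormedAddCommGroup X] [NormedSpace ℝ X]
    [NormedAddCommGroup Y] [NormedSpace ℝ Y]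
    (A : X → Y) (Q : Set X) (N : ℝ) : ℝ≥0∞ :=
  ⨅ S ∈ {S : X →L[ℝ] Y | ‖S‖ ≤ N}, Uerr A S Q

/-- Stechkin's theorem: if `A` is homogeneous on its domain `D`, `Q ⊆ D` is centrally
symmetric and convex, and `x₀ ∈ Q`, `S₀` bounded linear satisfy
`‖A x₀‖ = U(A,S₀;Q) + ‖S₀‖·‖x₀‖`, then `Ω(‖x₀‖,A;Q) = ‖A x₀‖` and
`E_{‖S₀‖}(A;Q) = U(A,S₀;Q) = ‖A x₀‖ − ‖S₀‖·‖x₀‖`. -/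
theorem stechkin_theorem {X Y : Type*} [NormedAddCommGroup X] [NormedSpace ℝ X]
    [NormedAddCommGroup Y] [NormedSpace ℝ Y]
    (A : X → Y) (D : Set X)
    (hhom : ∀ (c : ℝ), ∀ x ∈ D, c • x ∈ D ∧ A (c • x) = c • A x)
    (Q : Set X) (hQD : Q ⊆ D) (hsym : ∀ x ∈ Q, -x ∈ Q) (hconv : Convex ℝ Q)
    (x₀ : X) (hx₀ : x₀ ∈ Q) (S₀ : X →L[ℝ] Y)
    (hext : (‖A x₀‖₊ : ℝ≥0∞) = Uerr A S₀ Q + (‖S₀‖₊ : ℝ≥0∞) * (‖x₀‖₊ : ℝ≥0∞)) :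
    modCont A Q ‖x₀‖ = (‖A x₀‖₊ : ℝ≥0∞) ∧
    bestApprox A Q ‖S₀‖ = Uerr A S₀ Q ∧
    Uerr A S₀ Q = (‖A x₀‖₊ : ℝ≥0∞) - (‖S₀‖₊ : ℝ≥0∞) * (‖x₀‖₊ : ℝ≥0∞) := by
  have hcne : ((‖S₀‖₊ : ℝ≥0∞) * (‖x₀‖₊ : ℝ≥0∞)) ≠ ∞ := by
    simp [ENNReal.mul_eq_top]
  have key : Uerr A S₀ Q = (‖A x₀‖₊ : ℝ≥0∞) - (‖S₀‖₊ : ℝ≥0∞) * (‖x₀‖₊ : ℝ≥0∞) := by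
    rw [hext]
    exact (ENNReal.add_sub_cancel_right hcne).symm
  refine ⟨?_, ?_, key⟩
  · apply le_antisymm
    · refine iSup₂_le fun f hf => ?_
      obtain ⟨hfQ, hfn⟩ := hf
      have h1 : ‖A f‖₊ ≤ ‖A f - S₀ f‖₊ + ‖S₀ f‖₊ := by
        calc ‖A f‖₊ = ‖(A f - S₀ f) + S₀ f‖₊ := by rw [sub_add_cancel]
          _ ≤ _ := nnnorm_add_le _ _
      have h2 : (‖A f - S₀ f‖₊ : ℝ≥0∞) ≤ Uerr A S₀ Q :=
        le_iSup₂ (f := fun x (_ : x ∈ Q) => ((‖A x - S₀ x‖₊ : ℝ≥0∞))) f hfQ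
      have h3 : (‖S₀ f‖₊ : ℝ≥0∞) ≤ (‖S₀‖₊ : ℝ≥0∞) * (‖x₀‖₊ : ℝ≥0∞) := by
        have := S₀.le_opNNNorm f
        have hf' : ‖f‖₊ ≤ ‖x₀‖₊ := by exact_mod_cast hfn
        calc (‖S₀ f‖₊ : ℝ≥0∞) ≤ ((‖S₀‖₊ * ‖f‖₊ : NNReal) : ℝ≥0∞) := by exact_mod_cast this
          _ ≤ _ := by
            rw [ENNReal.coe_mul]
            exact mul_le_mul_right (by exact_mod_cast hf') _
      calc (‖A f‖₊ : ℝ≥0∞) ≤ (‖A f - S₀ f‖₊ : ℝ≥0∞) + (‖S₀ f‖₊ : ℝ≥0∞) := by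
            exact_mod_cast h1
        _ ≤ Uerr A S₀ Q + (‖S₀‖₊ : ℝ≥0∞) * (‖x₀‖₊ : ℝ≥0∞) := add_le_add h2 h3
        _ = (‖A x₀‖₊ : ℝ≥0∞) := hext.symm
    · exact le_iSup₂ (f := fun f (_ : f ∈ {f | f ∈ Q ∧ ‖f‖ ≤ ‖x₀‖}) =>
        ((‖A f‖₊ : ℝ≥0∞))) x₀ ⟨hx₀, le_refl _⟩
  · apply le_antisymm
    · exact iInf₂_le S₀ (show ‖S₀‖ ≤ ‖S₀‖ from le_refl _)
    · refine le_iInf₂ fun S hS => ?_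
      rw [key, tsub_le_iff_right]
      have h1 : ‖A x₀‖₊ ≤ ‖A x₀ - S x₀‖₊ + ‖S x₀‖₊ := by
        calc ‖A x₀‖₊ = ‖(A x₀ - S x₀) + S x₀‖₊ := by rw [sub_add_cancel]
          _ ≤ _ := nnnorm_add_le _ _
      have h2 : (‖A x₀ - S x₀‖₊ : ℝ≥0∞) ≤ Uerr A S Q :=
        le_iSup₂ (f := fun x (_ : x ∈ Q) => ((‖A x - S x‖₊ : ℝ≥0∞))) x₀ hx₀
      have hS' : ‖S‖₊ ≤ ‖S₀‖₊ := by
        rw [← NNReal.coe_le_coe]; exact_mod_cast hS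
      have h3 : (‖S x₀‖₊ : ℝ≥0∞) ≤ (‖S₀‖₊ : ℝ≥0∞) * (‖x₀‖₊ : ℝ≥0∞) := by
        calc (‖S x₀‖₊ : ℝ≥0∞) ≤ ((‖S‖₊ * ‖x₀‖₊ : NNReal) : ℝ≥0∞) := by
              exact_mod_cast S.le_opNNNorm x₀
          _ ≤ _ := by
            rw [ENNReal.coe_mul]
            exact mul_le_mul_left (by exact_mod_cast hS') _
      calc (‖A x₀‖₊ : ℝ≥0∞) ≤ (‖A x₀ - S x₀‖₊ : ℝ≥0∞) + (‖S x₀‖₊ : ℝ≥0∞) := by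
            exact_mod_cast h1
        _ ≤ Uerr A S Q + (‖S₀‖₊ : ℝ≥0∞) * (‖x₀‖₊ : ℝ≥0∞) := add_le_add h2 h3
end
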